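/- Let X and Y be real Banach spaces and S : X → Y a bounded linear operator. Then for every real α > 0 and every n ≥ 1, the n-th Gelfand number satisfies c_n(S) ≤ e^α · n^{−α+1} · sup_{1 ≤ k ≤ n} k^α h_k(S), where h_k are the Hilbert numbers. -/

import Mathlib

/-- The real Hilbert sequence space ℓ₂ = lp(ℕ, 2). -/
abbrev Ell2 : Type := lp (fun _ : ℕ => ℝ) 2

/-- Approximation numbers. -/
noncomputable def approxNumber {X Y : Type*} [NormedAddCommGroup X] [NormedSpace ℝ X]
    [NormedAddCommGroup Y] [NormedSpace ℝ Y] (n : ℕ) (S : X →L[ℝ] Y) : ℝ :=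
  sInf {r : ℝ | ∃ L : X →L[ℝ] Y, LinearMap.rank (L : X →ₗ[ℝ] Y) < n ∧ r = ‖S - L‖}

/-- Gelfand numbers. -/
noncomputable def gelfandNumber {X Y : Type*} [NormedAddCommGroup X] [NormedSpace ℝ X]
    [NormedAddCommGroup Y] [NormedSpace ℝ Y] (n : ℕ) (S : X →L[ℝ] Y) : ℝ :=
  sInf {r : ℝ | ∃ M : Submodule ℝ X, IsClosed (M : Set X) ∧ Module.rank ℝ (X ⧸ M) < n ∧
    r = ‖S.comp M.subtypeL‖}

/-- The canonical quotient map onto `Y ⧸ N`, as a continuous linear map (with respect to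
the quotient (semi)norm). -/
noncomputable def quotientCLM {Y : Type*} [NormedAddCommGroup Y] [NormedSpace ℝ Y]
    (N : Submodule ℝ Y) : Y →L[ℝ] Y ⧸ N :=
  LinearMap.mkContinuous N.mkQ 1 fun y => by
    simpa using Submodule.Quotient.norm_mk_le N y

/-- Kolmogorov numbers. -/
noncomputable def kolmogorovNumber {X Y : Type*} [NormedAddCommGroup X] [NormedSpace ℝ X]
    [NormedAddCommGroup Y] [NormedSpace ℝ Y] (n : ℕ) (S : X →L[ℝ] Y) : ℝ :=
  sInf {r : ℝ | ∃ N : Submodule ℝ Y, Module.rank ℝ N < n ∧ r = ‖(quotientCLM N).comp S‖}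

/-- Hilbert numbers. -/
noncomputable def hilbertNumber {X Y : Type*} [NormedAddCommGroup X] [NormedSpace ℝ X]
    [NormedAddCommGroup Y] [NormedSpace ℝ Y] (n : ℕ) (S : X →L[ℝ] Y) : ℝ :=
  sSup {r : ℝ | ∃ (A : Ell2 →L[ℝ] X) (B : Y →L[ℝ] Ell2), A ≠ 0 ∧ B ≠ 0 ∧
    r = approxNumber n (B.comp (S.comp A)) / (‖B‖ * ‖A‖)}

section Basics
variable {W X Y Z : Type*} [NormedAddCommGroup X] [NormedSpace ℝ X]
  [NormedAddCommGroup Y] [NormedSpace ℝ Y]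
  [NormedAddCommGroup Z] [NormedSpace ℝ Z] [NormedAddCommGroup W] [NormedSpace ℝ W]

lemma approxSet_nonempty {n : ℕ} (hn : 1 ≤ n) (S : X →L[ℝ] Y) :
    {r : ℝ | ∃ L : X →L[ℝ] Y, LinearMap.rank (L : X →ₗ[ℝ] Y) < n ∧ r = ‖S - L‖}.Nonempty := by
  refine ⟨‖S‖, 0, ?_, by simp⟩
  have : LinearMap.rank ((0 : X →L[ℝ] Y) : X →ₗ[ℝ] Y) = 0 := by
    simpa using LinearMap.rank_zero (K := ℝ) (V := X) (V' := Y)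
  rw [this]
  exact_mod_cast Nat.lt_of_lt_of_le Nat.zero_lt_one hn

lemma approxSet_bddBelow {n : ℕ} (S : X →L[ℝ] Y) :
    BddBelow {r : ℝ | ∃ L : X →L[ℝ] Y, LinearMap.rank (L : X →ₗ[ℝ] Y) < n ∧ r = ‖S - L‖} :=
  ⟨0, fun _ ⟨_, _, hr⟩ => hr ▸ norm_nonneg _⟩

lemma approxNumber_nonneg (n : ℕ) (S : X →L[ℝ] Y) : 0 ≤ approxNumber n S :=
  Real.sInf_nonneg fun _ ⟨_, _, hr⟩ => hr ▸ norm_nonneg _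

lemma approxNumber_le {n : ℕ} (S L : X →L[ℝ] Y)
    (hL : LinearMap.rank (L : X →ₗ[ℝ] Y) < n) : approxNumber n S ≤ ‖S - L‖ :=
  csInf_le (approxSet_bddBelow S) ⟨L, hL, rfl⟩

lemma approxNumber_le_norm {n : ℕ} (hn : 1 ≤ n) (S : X →L[ℝ] Y) :
    approxNumber n S ≤ ‖S‖ := by
  have h0 : LinearMap.rank ((0 : X →L[ℝ] Y) : X →ₗ[ℝ] Y) < n := by
    have : LinearMap.rank ((0 : X →L[ℝ] Y) : X →ₗ[ℝ] Y) = 0 := by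
      simpa using LinearMap.rank_zero (K := ℝ) (V := X) (V' := Y)
    rw [this]; exact_mod_cast Nat.lt_of_lt_of_le Nat.zero_lt_one hn
  simpa using approxNumber_le S 0 h0

lemma le_approxNumber {n : ℕ} (hn : 1 ≤ n) {c : ℝ} (S : X →L[ℝ] Y)
    (h : ∀ L : X →L[ℝ] Y, LinearMap.rank (L : X →ₗ[ℝ] Y) < n → c ≤ ‖S - L‖) :
    c ≤ approxNumber n S :=
  le_csInf (approxSet_nonempty hn S) fun _ ⟨L, hL, hr⟩ => hr ▸ h L hL

end Basics

section Comp
universe u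
variable {W X Y Z : Type u} [NormedAddCommGroup X] [NormedSpace ℝ X]
  [NormedAddCommGroup Y] [NormedSpace ℝ Y]
  [NormedAddCommGroup Z] [NormedSpace ℝ Z] [NormedAddCommGroup W] [NormedSpace ℝ W]

lemma approxNumber_comp_le {n : ℕ} (hn : 1 ≤ n) (U : Y →L[ℝ] Z) (T : X →L[ℝ] Y)
    (V : W →L[ℝ] X) :
    approxNumber n (U.comp (T.comp V)) ≤ ‖U‖ * ‖V‖ * approxNumber n T := by
  refine le_of_forall_pos_le_add fun ε hε => ?_
  set K := ‖U‖ * ‖V‖ with hK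
  have hK0 : 0 ≤ K := mul_nonneg (norm_nonneg _) (norm_nonneg _)
  obtain ⟨r, ⟨L, hL, hr⟩, hlt⟩ := Real.lt_sInf_add_pos (approxSet_nonempty hn T)
    (ε := ε / (K + 1)) (by positivity)
  have hrank : LinearMap.rank (((U.comp L).comp V : W →L[ℝ] Z) : W →ₗ[ℝ] Z) < n := by
    refine lt_of_le_of_lt ?_ hL
    calc LinearMap.rank (((U.comp L).comp V : W →L[ℝ] Z) : W →ₗ[ℝ] Z)
        = LinearMap.rank (((U.comp L : X →L[ℝ] Z) : X →ₗ[ℝ] Z).comp (V : W →ₗ[ℝ] X)) := rfl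
      _ ≤ LinearMap.rank ((U.comp L : X →L[ℝ] Z) : X →ₗ[ℝ] Z) :=
          LinearMap.rank_comp_le_left _ _
      _ = LinearMap.rank ((U : Y →ₗ[ℝ] Z).comp (L : X →ₗ[ℝ] Y)) := rfl
      _ ≤ LinearMap.rank (L : X →ₗ[ℝ] Y) := LinearMap.rank_comp_le_right _ _
  have hsub : U.comp (T.comp V) - (U.comp L).comp V = U.comp ((T - L).comp V) := by
    ext w; simp
  have h3 : approxNumber n (U.comp (T.comp V)) ≤ ‖U‖ * (‖T - L‖ * ‖V‖) := by
    refine (approxNumber_le _ _ hrank).trans ?_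
    rw [hsub]
    exact (ContinuousLinearMap.opNorm_comp_le _ _).trans
      (by gcongr; exact ContinuousLinearMap.opNorm_comp_le _ _)
  refine h3.trans ?_
  have h2 : ‖T - L‖ < approxNumber n T + ε / (K + 1) := hr ▸ hlt
  calc ‖U‖ * (‖T - L‖ * ‖V‖) = K * ‖T - L‖ := by rw [hK]; ring
    _ ≤ K * (approxNumber n T + ε / (K + 1)) := mul_le_mul_of_nonneg_left h2.le hK0
    _ = K * approxNumber n T + K * (ε / (K + 1)) := by ring
    _ ≤ K * approxNumber n T + ε := by
        have : K * (ε / (K + 1)) ≤ ε := by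
          rw [mul_div_assoc']
          exact (div_le_iff₀ (by positivity)).2 (by nlinarith)
        linarith

end Comp

section Basics2
variable {W X Y Z : Type*} [NormedAddCommGroup X] [NormedSpace ℝ X]
  [NormedAddCommGroup Y] [NormedSpace ℝ Y]
  [NormedAddCommGroup Z] [NormedSpace ℝ Z] [NormedAddCommGroup W] [NormedSpace ℝ W]

lemma hilbertNumber_nonneg (n : ℕ) (S : X →L[ℝ] Y) : 0 ≤ hilbertNumber n S :=
  Real.sSup_nonneg fun _ ⟨A, B, hA, hB, hr⟩ => hr ▸ div_nonneg (approxNumber_nonneg _ _)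
    (mul_nonneg (norm_nonneg _) (norm_nonneg _))

lemma approx_le_hilbert_mul {n : ℕ} (hn : 1 ≤ n) (S : X →L[ℝ] Y)
    (A : Ell2 →L[ℝ] X) (B : Y →L[ℝ] Ell2) (hA : A ≠ 0) (hB : B ≠ 0) :
    approxNumber n (B.comp (S.comp A)) ≤ hilbertNumber n S * (‖B‖ * ‖A‖) := by
  have hpos : (0:ℝ) < ‖B‖ * ‖A‖ :=
    mul_pos (norm_pos_iff.2 hB) (norm_pos_iff.2 hA)
  have hbdd : BddAbove {r : ℝ | ∃ (A : Ell2 →L[ℝ] X) (B : Y →L[ℝ] Ell2), A ≠ 0 ∧ B ≠ 0 ∧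
      r = approxNumber n (B.comp (S.comp A)) / (‖B‖ * ‖A‖)} := by
    refine ⟨‖S‖, fun r ⟨A', B', hA', hB', hr'⟩ => ?_⟩
    have hpos' : (0:ℝ) < ‖B'‖ * ‖A'‖ :=
      mul_pos (norm_pos_iff.2 hB') (norm_pos_iff.2 hA')
    rw [hr', div_le_iff₀ hpos']
    calc approxNumber n (B'.comp (S.comp A')) ≤ ‖B'.comp (S.comp A')‖ :=
          approxNumber_le_norm hn _
      _ ≤ ‖B'‖ * ‖S.comp A'‖ := ContinuousLinearMap.opNorm_comp_le _ _
      _ ≤ ‖B'‖ * (‖S‖ * ‖A'‖) := by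
          gcongr; exact ContinuousLinearMap.opNorm_comp_le _ _
      _ = ‖S‖ * (‖B'‖ * ‖A'‖) := by ring
  have hmem : approxNumber n (B.comp (S.comp A)) / (‖B‖ * ‖A‖) ∈
      {r : ℝ | ∃ (A : Ell2 →L[ℝ] X) (B : Y →L[ℝ] Ell2), A ≠ 0 ∧ B ≠ 0 ∧
      r = approxNumber n (B.comp (S.comp A)) / (‖B‖ * ‖A‖)} := ⟨A, B, hA, hB, rfl⟩
  have := le_csSup hbdd hmem
  rw [div_le_iff₀ hpos] at this
  exact this

end Basics2


open Matrix RealInnerProductSpace in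
lemma det_le_prod_approxNumber {n : ℕ} (M : Matrix (Fin n) (Fin n) ℝ)
    (T : EuclideanSpace ℝ (Fin n) →L[ℝ] EuclideanSpace ℝ (Fin n))
    (hT : ∀ v (j : Fin n), T v j = M.mulVec (fun i => v i) j) :
    |M.det| ≤ ∏ k ∈ Finset.range n, approxNumber (k + 1) T := by
  classical
  set G := Mᴴ * M with hGdef
  have hPSD : G.PosSemidef := Matrix.posSemidef_conjTranspose_mul_self M
  set hG := hPSD.1 with hGh
  set μ : Fin n → ℝ := hG.eigenvalues with hμ
  set v : OrthonormalBasis (Fin n) ℝ (EuclideanSpace ℝ (Fin n)) := hG.eigenvectorBasis with hv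
  have hμ0 : ∀ i, 0 ≤ μ i := fun i => hPSD.eigenvalues_nonneg i
  -- sorted permutation
  set σ : Equiv.Perm (Fin n) := (Fin.revPerm : Equiv.Perm (Fin n)).trans (Tuple.sort μ) with hσ
  set ν : Fin n → ℝ := μ ∘ σ with hν
  have hanti : Antitone ν := by
    intro a b hab
    exact Tuple.monotone_sort μ (by simpa using Fin.rev_le_rev.mpr hab)
  -- key: each approx number is at least sqrt (ν k)
  -- the action of G as a linear map on Euclidean space
  set Gl : EuclideanSpace ℝ (Fin n) →ₗ[ℝ] EuclideanSpace ℝ (Fin n) := Matrix.toEuclideanLin G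
    with hGl
  have hGcomp : ∀ a : EuclideanSpace ℝ (Fin n),
      Gl a = Matrix.toEuclideanLin Mᴴ (Matrix.toEuclideanLin M a) := by
    intro a
    simp [hGl, Matrix.toEuclideanLin_apply, Matrix.mulVec_mulVec, hGdef]
  have hsym : ∀ a b : EuclideanSpace ℝ (Fin n), ⟪Gl a, b⟫ = ⟪a, Gl b⟫ := by
    intro a b
    have : Gl = LinearMap.adjoint Gl := by
      rw [hGl]
      conv_lhs => rw [← hG]
      exact Matrix.toEuclideanLin_conjTranspose_eq_adjoint G
    conv_lhs => rw [this]
    exact LinearMap.adjoint_inner_left _ _ _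
  have hTeq : ∀ a : EuclideanSpace ℝ (Fin n), T a = Matrix.toEuclideanLin M a := by
    intro a
    apply (WithLp.equiv 2 (Fin n → ℝ)).injective
    funext j
    simpa [Matrix.toEuclideanLin_apply] using hT a j
  have hTnorm : ∀ a : EuclideanSpace ℝ (Fin n), ‖T a‖ ^ 2 = ⟪a, Gl a⟫ := by
    intro a
    rw [hGcomp, Matrix.toEuclideanLin_conjTranspose_eq_adjoint,
      LinearMap.adjoint_inner_right, hTeq, real_inner_self_eq_norm_sq]
  have heig : ∀ i, Gl (v i) = μ i • v i := by
    intro i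
    have h1 : G *ᵥ ⇑(v i) = μ i • ⇑(v i) := hG.mulVec_eigenvectorBasis i
    apply (WithLp.equiv 2 (Fin n → ℝ)).injective
    funext j
    have := congrFun h1 j
    simpa [hGl, Matrix.toEuclideanLin_apply] using this
  have hquad : ∀ a : EuclideanSpace ℝ (Fin n), ⟪a, Gl a⟫ = ∑ i, μ i * ⟪v i, a⟫ ^ 2 := by
    intro a
    rw [← v.sum_inner_mul_inner a (Gl a)]
    refine Finset.sum_congr rfl fun i _ => ?_
    have h1 : ⟪v i, Gl a⟫ = ⟪Gl (v i), a⟫ := (hsym (v i) a).symm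
    rw [h1, heig, real_inner_smul_left, real_inner_comm a (v i)]
    ring
  have hkey : ∀ k : Fin n, Real.sqrt (ν k) ≤ approxNumber (k + 1) T := by
    intro k
    have hν0 : 0 ≤ ν k := hμ0 _
    have hkn : (k : ℕ) + 1 ≤ n := k.isLt
    set w : Fin ((k : ℕ) + 1) → EuclideanSpace ℝ (Fin n) :=
      fun j => v (σ (Fin.castLE hkn j)) with hw
    have hwinj : Function.Injective fun j : Fin ((k : ℕ) + 1) => σ (Fin.castLE hkn j) :=
      σ.injective.comp (Fin.castLE_injective hkn)
    have hwli : LinearIndependent ℝ w :=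
      v.orthonormal.linearIndependent.comp _ hwinj
    set V : Submodule ℝ (EuclideanSpace ℝ (Fin n)) := Submodule.span ℝ (Set.range w) with hV
    have hVrank : Module.finrank ℝ V = (k : ℕ) + 1 := by
      rw [hV, finrank_span_eq_card hwli, Fintype.card_fin]
    refine le_approxNumber (by omega) T fun L hL => ?_
    set Ll : EuclideanSpace ℝ (Fin n) →ₗ[ℝ] EuclideanSpace ℝ (Fin n) :=
      (L : EuclideanSpace ℝ (Fin n) →ₗ[ℝ] EuclideanSpace ℝ (Fin n)) with hLl
    have hLfin : Module.finrank ℝ (LinearMap.range Ll) ≤ (k : ℕ) := by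
      have h1 : (Module.finrank ℝ (LinearMap.range Ll) : Cardinal) =
          Module.rank ℝ (LinearMap.range Ll) := Module.finrank_eq_rank ℝ _
      have h2 : LinearMap.rank Ll < ((k : ℕ) + 1 : ℕ) := hL
      rw [LinearMap.rank, ← h1] at h2
      exact_mod_cast Nat.lt_succ_iff.mp (by exact_mod_cast h2)
    have hker : Module.finrank ℝ (LinearMap.range Ll) +
        Module.finrank ℝ (LinearMap.ker Ll) = n := by
      rw [LinearMap.finrank_range_add_finrank_ker Ll, finrank_euclideanSpace_fin]
    have hsup : Module.finrank ℝ ((V ⊔ LinearMap.ker Ll : Submodule ℝ _)) ≤ n := by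
      have := Submodule.finrank_le (V ⊔ LinearMap.ker Ll : Submodule ℝ (EuclideanSpace ℝ (Fin n)))
      simpa [finrank_euclideanSpace_fin] using this
    have hinf : 0 < Module.finrank ℝ ((V ⊓ LinearMap.ker Ll : Submodule ℝ _)) := by
      have heq := Submodule.finrank_sup_add_finrank_inf_eq V (LinearMap.ker Ll)
      omega
    have hbot : (V ⊓ LinearMap.ker Ll : Submodule ℝ _) ≠ ⊥ := by
      intro hb
      rw [hb, finrank_bot] at hinf
      exact lt_irrefl 0 hinf
    obtain ⟨u, hu, hu0⟩ := Submodule.exists_mem_ne_zero_of_ne_bot hbot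
    set x : EuclideanSpace ℝ (Fin n) := ‖u‖⁻¹ • u with hx
    have hx1 : ‖x‖ = 1 := norm_smul_inv_norm hu0
    have hxV : x ∈ V := V.smul_mem _ (hu.1)
    have hxker : Ll x = 0 := by
      have : x ∈ LinearMap.ker Ll := (LinearMap.ker Ll).smul_mem _ hu.2
      simpa using this
    -- orthogonality: inner products with eigenvectors outside the selected set vanish
    have horth : ∀ i : Fin n, (¬ ∃ j : Fin ((k : ℕ) + 1), σ (Fin.castLE hkn j) = i) →
        ⟪v i, x⟫ = 0 := by
      intro i hi
      have hVle : V ≤ (ℝ ∙ (v i))ᗮ := by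
        rw [hV, Submodule.span_le]
        rintro _ ⟨j, rfl⟩
        rw [SetLike.mem_coe, Submodule.mem_orthogonal_singleton_iff_inner_right]
        exact v.orthonormal.2 fun h => hi ⟨j, h.symm⟩
      have := hVle hxV
      rw [Submodule.mem_orthogonal_singleton_iff_inner_right] at this
      exact this
    -- lower bound on ‖T x‖
    have hTx : ν k ≤ ‖T x‖ ^ 2 := by
      rw [hTnorm, hquad]
      have hterm : ∀ i : Fin n, ν k * ⟪v i, x⟫ ^ 2 ≤ μ i * ⟪v i, x⟫ ^ 2 := by
        intro i
        by_cases hi : ∃ j : Fin ((k : ℕ) + 1), σ (Fin.castLE hkn j) = i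
        · obtain ⟨j, rfl⟩ := hi
          have : ν k ≤ μ (σ (Fin.castLE hkn j)) := by
            have hj : (Fin.castLE hkn j) ≤ k := by
              have := j.isLt
              exact Fin.mk_le_mk.mpr (by omega)
            exact hanti hj
          exact mul_le_mul_of_nonneg_right this (sq_nonneg _)
        · rw [horth i hi]
          simp
      calc ν k = ν k * ∑ i, ⟪v i, x⟫ ^ 2 := by
            have hpar : ∑ i, ⟪v i, x⟫ ^ 2 = 1 := by
              have := v.sum_inner_mul_inner x x
              rw [real_inner_self_eq_norm_sq, hx1, one_pow] at this
              rw [← this]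
              refine Finset.sum_congr rfl fun i _ => ?_
              rw [sq]
              congr 1
              exact real_inner_comm x (v i)
            rw [hpar, mul_one]
        _ = ∑ i, ν k * ⟪v i, x⟫ ^ 2 := by rw [Finset.mul_sum]
        _ ≤ ∑ i, μ i * ⟪v i, x⟫ ^ 2 := Finset.sum_le_sum fun i _ => hterm i
    have hTxnorm : Real.sqrt (ν k) ≤ ‖T x‖ := by
      have := Real.sqrt_le_sqrt hTx
      rwa [Real.sqrt_sq (norm_nonneg _)] at this
    calc Real.sqrt (ν k) ≤ ‖T x‖ := hTxnorm
      _ = ‖(T - L) x‖ := by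
          rw [ContinuousLinearMap.sub_apply]
          have : L x = 0 := hxker
          rw [this, sub_zero]
      _ ≤ ‖T - L‖ * ‖x‖ := (T - L).le_opNorm x
      _ = ‖T - L‖ := by rw [hx1, mul_one]
  -- product computation
  have hprod1 : ∏ i : Fin n, Real.sqrt (ν i) ≤ ∏ i : Fin n, approxNumber ((i : ℕ) + 1) T :=
    Finset.prod_le_prod (fun i _ => Real.sqrt_nonneg _) (fun i _ => hkey i)
  have hprod2 : ∏ i : Fin n, approxNumber ((i : ℕ) + 1) T =
      ∏ k ∈ Finset.range n, approxNumber (k + 1) T :=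
    Fin.prod_univ_eq_prod_range (fun k => approxNumber (k + 1) T) n
  have hdet : |M.det| = ∏ i : Fin n, Real.sqrt (ν i) := by
    have hsq : (∏ i : Fin n, Real.sqrt (ν i)) ^ 2 = ∏ i : Fin n, ν i := by
      rw [← Finset.prod_pow]
      exact Finset.prod_congr rfl fun i _ => Real.sq_sqrt (hμ0 _)
    have hνμ : ∏ i : Fin n, ν i = ∏ i : Fin n, μ i := Equiv.prod_comp σ μ
    have hdetG : ∏ i : Fin n, μ i = G.det := by
      have := hG.det_eq_prod_eigenvalues
      exact_mod_cast this.symm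
    have hGM : G.det = M.det ^ 2 := by
      rw [hGdef, Matrix.det_mul, Matrix.det_conjTranspose]
      simp [sq]
    have habs2 : |M.det| ^ 2 = (∏ i : Fin n, Real.sqrt (ν i)) ^ 2 := by
      rw [sq_abs, hsq, hνμ, hdetG, hGM]
    have h1 : |M.det| = Real.sqrt (|M.det| ^ 2) := (Real.sqrt_sq (abs_nonneg _)).symm
    rw [h1, habs2, Real.sqrt_sq (Finset.prod_nonneg fun i _ => Real.sqrt_nonneg _)]
  rw [hdet, ← hprod2]
  exact hprod1


lemma rpow_two_eq_sq (y : ℝ) : y ^ (2:ℝ) = y ^ (2:ℕ) := by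
  rw [← Real.rpow_natCast y 2]; norm_num

lemma lp.single_add' (i : ℕ) (a b : ℝ) :
    lp.single (E := fun _ : ℕ => ℝ) 2 i (a + b) =
      lp.single 2 i a + lp.single 2 i b := by
  refine lp.ext (funext fun j => ?_)
  by_cases hi : j = i
  · subst hi
    simp [lp.single_apply_self]
  · simp [lp.single_apply_ne 2 i _ hi]

/-- The embedding of `ℝ^n` into `ℓ²` by extension with zeroes, as a linear map. -/
noncomputable def euclToEll2L (n : ℕ) : EuclideanSpace ℝ (Fin n) →ₗ[ℝ] Ell2 where
  toFun v := ∑ i : Fin n, lp.single 2 (i : ℕ) (v i)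
  map_add' a b := by
    rw [← Finset.sum_add_distrib]
    exact Finset.sum_congr rfl fun i _ => lp.single_add' (i : ℕ) (a i) (b i)
  map_smul' c a := by
    show ∑ i : Fin n, lp.single (E := fun _ : ℕ => ℝ) 2 (i : ℕ) ((c • a) i)
      = c • ∑ i : Fin n, lp.single (E := fun _ : ℕ => ℝ) 2 (i : ℕ) (a i)
    rw [Finset.smul_sum]
    refine Finset.sum_congr rfl fun i _ => ?_
    have h1 : (c • a) i = c • (a i) := rfl
    rw [h1, lp.single_smul]

lemma euclToEll2L_norm {n : ℕ} (v : EuclideanSpace ℝ (Fin n)) :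
    ‖euclToEll2L n v‖ = ‖v‖ := by
  have h2 : (0:ℝ) < (2 : ENNReal).toReal := by norm_num
  have hkey : ‖euclToEll2L n v‖ ^ ((2:ENNReal).toReal) = ‖v‖ ^ ((2:ENNReal).toReal) := by
    have h1 := lp.norm_sum_single (E := fun _ : ℕ => ℝ) (p := 2) h2
      (fun j => if h : j < n then v ⟨j, h⟩ else 0) (Finset.univ.map (Fin.valEmbedding (n := n)))
    rw [Finset.sum_map, Finset.sum_map] at h1
    simp only [Fin.valEmbedding_apply] at h1
    have heq : ∀ i : Fin n, (if h : (i:ℕ) < n then v ⟨(i:ℕ), h⟩ else 0) = v i := by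
      intro i; simp [i.isLt]
    have heqL : ∑ i : Fin n, lp.single (E := fun _ : ℕ => ℝ) 2 (i : ℕ)
          (if h : (i:ℕ) < n then v ⟨(i:ℕ), h⟩ else 0)
        = euclToEll2L n v := by
      refine Finset.sum_congr rfl fun i _ => ?_
      rw [heq i]
    have heqR : ∀ i : Fin n, ‖if h : (i:ℕ) < n then v ⟨(i:ℕ), h⟩ else 0‖ ^ ((2:ENNReal).toReal)
        = ‖v i‖ ^ ((2:ENNReal).toReal) := by
      intro i; rw [heq i]
    rw [heqL] at h1
    rw [h1, Finset.sum_congr rfl fun i _ => heqR i]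
    have hnn : (0:ℝ) ≤ ∑ i : Fin n, ‖v i‖ ^ (2:ℕ) :=
      Finset.sum_nonneg fun i _ => pow_nonneg (norm_nonneg _) _
    have : ‖v‖ ^ ((2:ENNReal).toReal) = ∑ i : Fin n, ‖v i‖ ^ ((2:ENNReal).toReal) := by
      have ht : ((2:ENNReal).toReal) = (2:ℝ) := by norm_num
      rw [ht, rpow_two_eq_sq, EuclideanSpace.norm_eq,
        Real.sq_sqrt hnn]
      exact Finset.sum_congr rfl fun i _ => (rpow_two_eq_sq _).symm
    rw [this]
  have ht : ((2:ENNReal).toReal) = (2:ℝ) := by norm_num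
  rw [ht] at hkey
  exact Real.rpow_left_injOn (by norm_num) (norm_nonneg _) (norm_nonneg _) hkey

/-- The embedding of `ℝ^n` into `ℓ²`, as a continuous linear map. -/
noncomputable def euclToEll2 (n : ℕ) : EuclideanSpace ℝ (Fin n) →L[ℝ] Ell2 :=
  LinearMap.mkContinuous (euclToEll2L n) 1 fun v => by rw [euclToEll2L_norm, one_mul]

lemma norm_euclToEll2_le (n : ℕ) : ‖euclToEll2 n‖ ≤ 1 :=
  LinearMap.mkContinuous_norm_le _ zero_le_one _

/-- The coordinate projection from `ℓ²` onto `ℝ^n`, as a linear map. -/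
noncomputable def ell2ToEuclL (n : ℕ) : Ell2 →ₗ[ℝ] EuclideanSpace ℝ (Fin n) where
  toFun z := WithLp.toLp 2 (fun i : Fin n => z (i : ℕ))
  map_add' a b := by ext i; simp
  map_smul' c a := by ext i; simp

lemma ell2ToEuclL_norm_le {n : ℕ} (z : Ell2) : ‖ell2ToEuclL n z‖ ≤ ‖z‖ := by
  have h2 : (0:ℝ) < (2 : ENNReal).toReal := by norm_num
  have hsum := lp.sum_rpow_le_norm_rpow (E := fun _ : ℕ => ℝ) (p := 2) h2 z
    (Finset.univ.map (Fin.valEmbedding (n := n)))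
  rw [Finset.sum_map] at hsum
  simp only [Fin.valEmbedding_apply] at hsum
  have ht : ((2:ENNReal).toReal) = (2:ℝ) := by norm_num
  rw [ht] at hsum
  rw [EuclideanSpace.norm_eq]
  have h1 : ∑ i : Fin n, ‖(ell2ToEuclL n z) i‖ ^ (2:ℕ) ≤ ‖z‖ ^ (2:ℕ) := by
    calc ∑ i : Fin n, ‖(ell2ToEuclL n z) i‖ ^ (2:ℕ)
        = ∑ i : Fin n, ‖z (i:ℕ)‖ ^ ((2:ℝ)) := by
          refine Finset.sum_congr rfl fun i _ => ?_
          rw [show (ell2ToEuclL n z) i = z (i:ℕ) from rfl]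
          exact (rpow_two_eq_sq _).symm
      _ ≤ ‖z‖ ^ ((2:ℝ)) := hsum
      _ = ‖z‖ ^ (2:ℕ) := rpow_two_eq_sq _
  calc Real.sqrt (∑ i : Fin n, ‖(ell2ToEuclL n z) i‖ ^ 2) ≤ Real.sqrt (‖z‖ ^ 2) :=
        Real.sqrt_le_sqrt h1
    _ = ‖z‖ := Real.sqrt_sq (norm_nonneg _)

/-- The coordinate projection from `ℓ²` onto `ℝ^n`, as a continuous linear map. -/
noncomputable def ell2ToEucl (n : ℕ) : Ell2 →L[ℝ] EuclideanSpace ℝ (Fin n) :=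
  LinearMap.mkContinuous (ell2ToEuclL n) 1 fun z => by
    rw [one_mul]; exact ell2ToEuclL_norm_le z

lemma norm_ell2ToEucl_le (n : ℕ) : ‖ell2ToEucl n‖ ≤ 1 :=
  LinearMap.mkContinuous_norm_le _ zero_le_one _

lemma ell2ToEucl_euclToEll2 {n : ℕ} (v : EuclideanSpace ℝ (Fin n)) :
    ell2ToEucl n (euclToEll2 n v) = v := by
  ext i
  show (euclToEll2 n v : ∀ _ : ℕ, ℝ) (i : ℕ) = v i
  have : (euclToEll2 n v : ∀ _ : ℕ, ℝ) (i : ℕ)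
      = ∑ j : Fin n, (lp.single (E := fun _ : ℕ => ℝ) 2 (j : ℕ) (v j) : ∀ _ : ℕ, ℝ) (i : ℕ) := by
    rw [show euclToEll2 n v = euclToEll2L n v from rfl]
    rw [show euclToEll2L n v = ∑ j : Fin n, lp.single (E := fun _ : ℕ => ℝ) 2 (j : ℕ) (v j)
      from rfl]
    rw [lp.coeFn_sum]
    simp
  rw [this]
  rw [Finset.sum_eq_single i]
  · exact lp.single_apply_self (E := fun _ : ℕ => ℝ) 2 (i : ℕ) (v i)
  · intro j _ hj
    exact lp.single_apply_ne 2 (j:ℕ) _ (fun h => hj (Fin.ext (by exact_mod_cast h.symm)))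
  · intro h; exact absurd (Finset.mem_univ i) h


universe u v

lemma exists_good_family {X : Type u} {Y : Type v} [NormedAddCommGroup X] [NormedSpace ℝ X]
    [NormedAddCommGroup Y] [NormedSpace ℝ Y]
    (S : X →L[ℝ] Y) (n : ℕ) {ρ : ℝ} (hρ : 0 < ρ)
    (h : ∀ M : Submodule ℝ X, IsClosed (M : Set X) → Module.rank ℝ (X ⧸ M) < n →
      ρ < ‖S.comp M.subtypeL‖) :
    ∃ (x : Fin n → X) (b : Fin n → (Y →L[ℝ] ℝ)),
      (∀ i, ‖x i‖ ≤ 1) ∧ (∀ i, ‖b i‖ ≤ 1) ∧ (∀ i, ρ < b i (S (x i))) ∧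
      (∀ i j, j < i → b j (S (x i)) = 0) := by
  suffices H : ∀ m : ℕ, m ≤ n → ∃ (x : Fin m → X) (b : Fin m → (Y →L[ℝ] ℝ)),
      (∀ i, ‖x i‖ ≤ 1) ∧ (∀ i, ‖b i‖ ≤ 1) ∧ (∀ i, ρ < b i (S (x i))) ∧
      (∀ i j, j < i → b j (S (x i)) = 0) from H n le_rfl
  intro m
  induction m with
  | zero => exact fun _ => ⟨Fin.elim0, Fin.elim0, fun i => i.elim0, fun i => i.elim0,
      fun i => i.elim0, fun i => i.elim0⟩
  | succ m ih =>
    intro hmn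
    obtain ⟨x, b, hx1, hb1, hdiag, htri⟩ := ih (Nat.le_of_succ_le hmn)
    -- the intersection of the kernels
    set M : Submodule ℝ X := ⨅ j : Fin m,
      LinearMap.ker (((b j).comp S : X →L[ℝ] ℝ) : X →ₗ[ℝ] ℝ) with hM
    have hMclosed : IsClosed (M : Set X) := by
      rw [hM, Submodule.coe_iInf]
      exact isClosed_iInter fun j =>
        ContinuousLinearMap.isClosed_ker ((b j).comp S)
    have hMrank : Module.rank ℝ (X ⧸ M) < n := by
      set Φ : X →ₗ[ℝ] (Fin m → ℝ) :=
        LinearMap.pi (fun j => (((b j).comp S : X →L[ℝ] ℝ) : X →ₗ[ℝ] ℝ)) with hΦ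
      have hkerΦ : LinearMap.ker Φ = M := by rw [hΦ, LinearMap.ker_pi, hM]
      have e := LinearMap.quotKerEquivRange Φ
      rw [hkerΦ] at e
      have h1 := e.lift_rank_eq
      have h2 : Module.rank ℝ (LinearMap.range Φ) ≤ (m : Cardinal) :=
        le_trans (Submodule.rank_le _) (rank_fin_fun m).le
      have h3 : Cardinal.lift.{0} (Module.rank ℝ (X ⧸ M)) ≤
          Cardinal.lift.{u} ((m : Cardinal.{0})) := by
        rw [h1]; exact Cardinal.lift_le.mpr h2
      rw [Cardinal.lift_natCast, Cardinal.lift_uzero] at h3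
      exact lt_of_le_of_lt h3 (by exact_mod_cast Nat.lt_of_succ_le hmn)
    have hnorm := h M hMclosed hMrank
    -- find a nearly norming element
    have hexu : ∃ u : M, ρ * ‖u‖ < ‖S.comp M.subtypeL u‖ := by
      by_contra hc
      push_neg at hc
      exact absurd (ContinuousLinearMap.opNorm_le_bound _ hρ.le hc) (not_le.mpr hnorm)
    obtain ⟨u, hu⟩ := hexu
    have hu0 : (u : X) ≠ 0 := by
      intro h0
      have h1 : (S.comp M.subtypeL) u = S (u : X) := rfl
      rw [h1, h0] at hu
      simp at hu
      rw [h0] at hu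
      simp at hu
    set xn : X := ‖(u : X)‖⁻¹ • (u : X) with hxn
    have hxn1 : ‖xn‖ = 1 := norm_smul_inv_norm hu0
    have hxnM : xn ∈ M := M.smul_mem _ u.2
    have hSxn : ρ < ‖S xn‖ := by
      have hupos : 0 < ‖(u : X)‖ := norm_pos_iff.mpr hu0
      have h1 : S xn = ‖(u : X)‖⁻¹ • S (u : X) := by rw [hxn, map_smul]
      rw [h1, norm_smul, norm_inv, Real.norm_eq_abs, abs_of_pos hupos]
      have hu' : ρ * ‖(u : X)‖ < ‖S (u : X)‖ := hu
      have hinv : ‖(u : X)‖ * ‖(u : X)‖⁻¹ = 1 := mul_inv_cancel₀ hupos.ne'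
      nlinarith [mul_lt_mul_of_pos_right hu' (inv_pos.mpr hupos)]
    have hSxn0 : S xn ≠ 0 := by
      intro h0
      rw [h0, norm_zero] at hSxn
      exact absurd hSxn (not_lt.mpr hρ.le)
    obtain ⟨g, hg1, hgx⟩ := exists_dual_vector ℝ (S xn) (norm_ne_zero_iff.mpr hSxn0)
    refine ⟨Fin.snoc x xn, Fin.snoc b g, ?_, ?_, ?_, ?_⟩
    · intro i
      refine Fin.lastCases ?_ (fun j => ?_) i
      · rw [Fin.snoc_last]; rw [hxn1]
      · rw [Fin.snoc_castSucc]; exact hx1 j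
    · intro i
      refine Fin.lastCases ?_ (fun j => ?_) i
      · rw [Fin.snoc_last, hg1]
      · rw [Fin.snoc_castSucc]; exact hb1 j
    · intro i
      refine Fin.lastCases ?_ (fun j => ?_) i
      · rw [Fin.snoc_last, Fin.snoc_last, hgx]
        exact hSxn
      · rw [Fin.snoc_castSucc, Fin.snoc_castSucc]
        exact hdiag j
    · intro i
      refine Fin.lastCases ?_ (fun i' => ?_) i
      · intro j hji
        have hj' : j ≠ Fin.last m := Fin.ne_last_of_lt hji
        obtain ⟨j', rfl⟩ := Fin.exists_castSucc_eq.mpr hj'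
        rw [Fin.snoc_castSucc, Fin.snoc_last]
        have hmem : xn ∈ LinearMap.ker (((b j').comp S : X →L[ℝ] ℝ) : X →ₗ[ℝ] ℝ) := by
          have h2 := hxnM
          rw [hM, Submodule.mem_iInf] at h2
          exact h2 j'
        simpa using hmem
      · intro j hji
        have hj' : j ≠ Fin.last m :=
          Fin.ne_last_of_lt (lt_trans hji (Fin.castSucc_lt_last i'))
        obtain ⟨j', rfl⟩ := Fin.exists_castSucc_eq.mpr hj'
        rw [Fin.snoc_castSucc, Fin.snoc_castSucc]
        exact htri i' j' (Fin.castSucc_lt_castSucc_iff.mp hji)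


section VecCLM
variable {X Y : Type*} [NormedAddCommGroup X] [NormedSpace ℝ X]
  [NormedAddCommGroup Y] [NormedSpace ℝ Y]

lemma sum_abs_le_sqrt_card {n : ℕ} (v : EuclideanSpace ℝ (Fin n)) :
    ∑ i, |v i| ≤ Real.sqrt n * ‖v‖ := by
  have hcs := Finset.sum_mul_sq_le_sq_mul_sq Finset.univ (fun _ : Fin n => (1:ℝ))
    (fun i => |v i|)
  simp only [one_mul, one_pow] at hcs
  have hcard : ∑ _i : Fin n, (1:ℝ) = n := by simp
  rw [hcard] at hcs
  have h1 : ∑ i, |v i| = Real.sqrt ((∑ i, |v i|)^2) :=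
    (Real.sqrt_sq (Finset.sum_nonneg fun i _ => abs_nonneg _)).symm
  rw [h1]
  calc Real.sqrt ((∑ i, |v i|)^2) ≤ Real.sqrt ((n:ℝ) * ∑ i, |v i|^2) := Real.sqrt_le_sqrt hcs
    _ = Real.sqrt n * Real.sqrt (∑ i, |v i|^2) := Real.sqrt_mul (Nat.cast_nonneg n) _
    _ = Real.sqrt n * ‖v‖ := by
        rw [EuclideanSpace.norm_eq]
        simp [Real.norm_eq_abs]

/-- Synthesis map `v ↦ ∑ vᵢ • xᵢ` as a continuous linear map with norm at most `√n`. -/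
noncomputable def sumVecCLM {n : ℕ} (x : Fin n → X) (hx : ∀ i, ‖x i‖ ≤ 1) :
    EuclideanSpace ℝ (Fin n) →L[ℝ] X :=
  LinearMap.mkContinuous
    { toFun := fun v => ∑ i, v i • x i
      map_add' := fun a b => by
        simp only [PiLp.add_apply, add_smul, Finset.sum_add_distrib]
      map_smul' := fun c a => by
        simp only [PiLp.smul_apply, smul_eq_mul, RingHom.id_apply, Finset.smul_sum, smul_smul] }
    (Real.sqrt n) fun v => by
      calc ‖∑ i, v i • x i‖ ≤ ∑ i, ‖v i • x i‖ := norm_sum_le _ _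
        _ ≤ ∑ i, |v i| := Finset.sum_le_sum fun i _ => by
            rw [norm_smul, Real.norm_eq_abs]
            exact mul_le_of_le_one_right (abs_nonneg _) (hx i)
        _ ≤ Real.sqrt n * ‖v‖ := sum_abs_le_sqrt_card v

lemma sumVecCLM_apply {n : ℕ} (x : Fin n → X) (hx : ∀ i, ‖x i‖ ≤ 1)
    (v : EuclideanSpace ℝ (Fin n)) : sumVecCLM x hx v = ∑ i, v i • x i := rfl

lemma sumVecCLM_norm_le {n : ℕ} (x : Fin n → X) (hx : ∀ i, ‖x i‖ ≤ 1) :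
    ‖sumVecCLM x hx‖ ≤ Real.sqrt n :=
  LinearMap.mkContinuous_norm_le _ (Real.sqrt_nonneg _) _

/-- Analysis map `y ↦ (bᵢ y)ᵢ` as a continuous linear map with norm at most `√n`. -/
noncomputable def dualVecCLM {n : ℕ} (b : Fin n → (Y →L[ℝ] ℝ)) (hb : ∀ i, ‖b i‖ ≤ 1) :
    Y →L[ℝ] EuclideanSpace ℝ (Fin n) :=
  LinearMap.mkContinuous
    { toFun := fun y => (WithLp.toLp 2 (fun i => b i y) : EuclideanSpace ℝ (Fin n))
      map_add' := fun y z => by ext i; simp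
      map_smul' := fun c y => by ext i; simp }
    (Real.sqrt n) fun y => by
      have h1 : ∀ i : Fin n, ‖(b i) y‖^2 ≤ ‖y‖^2 := by
        intro i
        have h2 : ‖(b i) y‖ ≤ ‖y‖ := by
          refine le_trans ((b i).le_opNorm y) ?_
          nlinarith [hb i, norm_nonneg y, norm_nonneg (b i)]
        nlinarith [norm_nonneg ((b i) y), norm_nonneg y]
      rw [EuclideanSpace.norm_eq]
      calc Real.sqrt (∑ i : Fin n, ‖(WithLp.toLp 2 (fun i => b i y) : EuclideanSpace ℝ (Fin n)) i‖^2)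
          ≤ Real.sqrt (∑ _i : Fin n, ‖y‖^2) := by
            apply Real.sqrt_le_sqrt
            exact Finset.sum_le_sum fun i _ => h1 i
        _ = Real.sqrt ((n:ℝ) * ‖y‖^2) := by
            rw [Finset.sum_const, Finset.card_univ, Fintype.card_fin, nsmul_eq_mul]
        _ = Real.sqrt n * ‖y‖ := by
            rw [Real.sqrt_mul (Nat.cast_nonneg n), Real.sqrt_sq (norm_nonneg _)]

lemma dualVecCLM_apply {n : ℕ} (b : Fin n → (Y →L[ℝ] ℝ)) (hb : ∀ i, ‖b i‖ ≤ 1)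
    (y : Y) (i : Fin n) : dualVecCLM b hb y i = b i y := rfl

lemma dualVecCLM_norm_le {n : ℕ} (b : Fin n → (Y →L[ℝ] ℝ)) (hb : ∀ i, ‖b i‖ ≤ 1) :
    ‖dualVecCLM b hb‖ ≤ Real.sqrt n :=
  LinearMap.mkContinuous_norm_le _ (Real.sqrt_nonneg _) _

end VecCLM

lemma pow_factorial_le (n : ℕ) : (n:ℝ)^n ≤ Real.exp 1 ^ n * (Nat.factorial n : ℝ) := by
  have h1 : ((n:ℝ))^n / (Nat.factorial n : ℝ) ≤ Real.exp n := by
    have h2 := Real.sum_le_exp_of_nonneg (x := (n:ℝ)) (Nat.cast_nonneg n) (n+1)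
    refine le_trans ?_ h2
    exact Finset.single_le_sum (f := fun i => (n:ℝ)^i / (Nat.factorial i : ℝ))
      (fun i _ => by positivity) (Finset.self_mem_range_succ n)
  have h3 : Real.exp 1 ^ n = Real.exp n := Real.exp_one_pow n
  have hfac : (0:ℝ) < (Nat.factorial n : ℝ) := by exact_mod_cast Nat.factorial_pos n
  rw [h3]
  calc ((n:ℝ))^n = ((n:ℝ))^n / (Nat.factorial n : ℝ) * (Nat.factorial n : ℝ) := by
        field_simp
    _ ≤ Real.exp n * (Nat.factorial n : ℝ) :=
        mul_le_mul_of_nonneg_right h1 hfac.le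


set_option maxHeartbeats 1000000 in
set_option synthInstance.maxHeartbeats 400000 in
theorem gelfand_le_exp_mul_sup_hilbert
    {X Y : Type*} [NormedAddCommGroup X] [NormedSpace ℝ X] [CompleteSpace X]
    [NormedAddCommGroup Y] [NormedSpace ℝ Y] [CompleteSpace Y]
    (S : X →L[ℝ] Y) (α : ℝ) (hα : 0 < α) (n : ℕ) (hn : 1 ≤ n) :
    gelfandNumber n S ≤
      Real.exp 1 ^ α * (n : ℝ) ^ (-α + 1) *
        (Finset.Icc 1 n).sup' (Finset.nonempty_Icc.mpr hn)
          (fun k => (k : ℝ) ^ α * hilbertNumber k S) := by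
  classical
  set σm : ℝ := (Finset.Icc 1 n).sup' (Finset.nonempty_Icc.mpr hn)
    (fun k => (k : ℝ) ^ α * hilbertNumber k S) with hσm
  have hσ0 : 0 ≤ σm := by
    have h1 : ((1:ℕ) : ℝ) ^ α * hilbertNumber 1 S ≤ σm := by
      rw [hσm]
      exact Finset.le_sup' (fun k : ℕ => (k:ℝ)^α * hilbertNumber k S)
        (Finset.mem_Icc.mpr ⟨le_rfl, hn⟩)
    have h2 : 0 ≤ ((1:ℕ):ℝ)^α * hilbertNumber 1 S := by
      have h3 := hilbertNumber_nonneg (X := X) (Y := Y) 1 S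
      have h4 : (0:ℝ) ≤ ((1:ℕ):ℝ)^α := Real.rpow_nonneg (by norm_num) α
      exact mul_nonneg h4 h3
    linarith
  set R : ℝ := Real.exp 1 ^ α * (n : ℝ) ^ (-α + 1) * σm with hR
  have hE1 : (0:ℝ) ≤ Real.exp 1 ^ α := Real.rpow_nonneg (Real.exp_pos 1).le α
  have hE2 : (0:ℝ) ≤ (n:ℝ) ^ (-α+1) := Real.rpow_nonneg (Nat.cast_nonneg n) _
  have hR0 : 0 ≤ R := by rw [hR]; exact mul_nonneg (mul_nonneg hE1 hE2) hσ0
  by_contra hcon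
  push_neg at hcon
  set ρ : ℝ := (R + gelfandNumber n S)/2 with hρdef
  have hρR : R < ρ := by rw [hρdef]; linarith
  have hρg : ρ < gelfandNumber n S := by rw [hρdef]; linarith
  have hρ0 : 0 < ρ := lt_of_le_of_lt hR0 hρR
  have hadm : ∀ M : Submodule ℝ X, IsClosed (M : Set X) → Module.rank ℝ (X ⧸ M) < n →
      ρ < ‖S.comp M.subtypeL‖ := by
    intro M hc hr
    refine lt_of_lt_of_le hρg ?_
    have hbdd : BddBelow {r : ℝ | ∃ M : Submodule ℝ X, IsClosed (M : Set X) ∧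
        Module.rank ℝ (X ⧸ M) < n ∧ r = ‖S.comp M.subtypeL‖} := by
      refine ⟨0, fun r hr => ?_⟩
      obtain ⟨M', -, -, rfl⟩ := hr
      exact norm_nonneg (S.comp M'.subtypeL)
    rw [gelfandNumber]
    exact csInf_le hbdd ⟨M, hc, hr, rfl⟩
  obtain ⟨x, b, hx1, hb1, hdiag, htri⟩ := exists_good_family S n hρ0 hadm
  set A0 : EuclideanSpace ℝ (Fin n) →L[ℝ] X := sumVecCLM x hx1 with hA0
  set B0 : Y →L[ℝ] EuclideanSpace ℝ (Fin n) := dualVecCLM b hb1 with hB0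
  set A : Ell2 →L[ℝ] X := A0.comp (ell2ToEucl n) with hA
  set B : Y →L[ℝ] Ell2 := (euclToEll2 n).comp B0 with hB
  set T : Ell2 →L[ℝ] Ell2 := B.comp (S.comp A) with hT
  set Mat : Matrix (Fin n) (Fin n) ℝ := fun j i => b j (S (x i)) with hMat
  have hi0 : (0:ℕ) < n := hn
  set i0 : Fin n := ⟨0, hi0⟩ with hi0def
  -- nontriviality of A and B
  have hSx0 : (0:ℝ) < b i0 (S (x i0)) := lt_trans hρ0 (hdiag i0)
  have hAne : A ≠ 0 := by
    intro h0
    have h1 : A (euclToEll2 n (EuclideanSpace.single i0 (1:ℝ))) = 0 := by rw [h0]; rfl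
    have h2 : A (euclToEll2 n (EuclideanSpace.single i0 (1:ℝ)))
        = A0 (EuclideanSpace.single i0 (1:ℝ)) := by
      rw [hA]
      show A0 (ell2ToEucl n (euclToEll2 n (EuclideanSpace.single i0 (1:ℝ)))) = _
      rw [ell2ToEucl_euclToEll2]
    have h3 : A0 (EuclideanSpace.single i0 (1:ℝ)) = x i0 := by
      rw [hA0, sumVecCLM_apply]
      rw [Finset.sum_eq_single i0]
      · rw [EuclideanSpace.single_apply, if_pos rfl, one_smul]
      · intro j _ hj
        rw [EuclideanSpace.single_apply, if_neg hj, zero_smul]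
      · intro hmem; exact absurd (Finset.mem_univ i0) hmem
    have h4 : x i0 = 0 := by rw [← h3, ← h2, h1]
    have h5 : S (x i0) = 0 := by rw [h4, map_zero]
    rw [h5, map_zero] at hSx0
    exact lt_irrefl 0 hSx0
  have hBne : B ≠ 0 := by
    intro h0
    have h1 : B (S (x i0)) = 0 := by rw [h0]; rfl
    have h2 : ‖B (S (x i0))‖ = ‖B0 (S (x i0))‖ := by
      rw [hB]
      show ‖euclToEll2 n (B0 (S (x i0)))‖ = _
      exact euclToEll2L_norm _
    rw [h1, norm_zero] at h2
    have h4 : B0 (S (x i0)) = 0 := norm_eq_zero.mp h2.symm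
    have h5 : b i0 (S (x i0)) = 0 := by
      have h6 : B0 (S (x i0)) i0 = b i0 (S (x i0)) := rfl
      rw [← h6, h4]; rfl
    rw [h5] at hSx0
    exact lt_irrefl 0 hSx0
  -- norm bounds
  have hAnorm : ‖A‖ ≤ Real.sqrt n := by
    rw [hA]
    refine le_trans (ContinuousLinearMap.opNorm_comp_le _ _) ?_
    calc ‖A0‖ * ‖ell2ToEucl n‖ ≤ Real.sqrt n * 1 :=
          mul_le_mul (sumVecCLM_norm_le x hx1) (norm_ell2ToEucl_le n)
            (norm_nonneg _) (Real.sqrt_nonneg _)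
      _ = Real.sqrt n := mul_one _
  have hBnorm : ‖B‖ ≤ Real.sqrt n := by
    rw [hB]
    refine le_trans (ContinuousLinearMap.opNorm_comp_le _ _) ?_
    calc ‖euclToEll2 n‖ * ‖B0‖ ≤ 1 * Real.sqrt n :=
          mul_le_mul (norm_euclToEll2_le n) (dualVecCLM_norm_le b hb1)
            (norm_nonneg _) zero_le_one
      _ = Real.sqrt n := one_mul _
  have hABn : ‖B‖ * ‖A‖ ≤ (n:ℝ) := by
    calc ‖B‖ * ‖A‖ ≤ Real.sqrt n * Real.sqrt n :=
          mul_le_mul hBnorm hAnorm (norm_nonneg _) (Real.sqrt_nonneg _)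
      _ = (n:ℝ) := Real.mul_self_sqrt (Nat.cast_nonneg n)
  -- the compressed operator and its matrix
  set Mcl : EuclideanSpace ℝ (Fin n) →L[ℝ] EuclideanSpace ℝ (Fin n) :=
    (ell2ToEucl n).comp (T.comp (euclToEll2 n)) with hMcl
  have hMclapp : ∀ (v : EuclideanSpace ℝ (Fin n)) (j : Fin n),
      Mcl v j = Mat.mulVec (fun i => v i) j := by
    intro v j
    have h1 : Mcl v = B0 (S (A0 v)) := by
      rw [hMcl]
      show ell2ToEucl n (T (euclToEll2 n v)) = _
      rw [hT]
      show ell2ToEucl n (B (S (A (euclToEll2 n v)))) = _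
      rw [hA, hB]
      show ell2ToEucl n ((euclToEll2 n) (B0 (S (A0 (ell2ToEucl n (euclToEll2 n v)))))) = _
      rw [ell2ToEucl_euclToEll2, ell2ToEucl_euclToEll2]
    rw [h1]
    show b j (S (A0 v)) = _
    rw [hA0, sumVecCLM_apply]
    calc b j (S (∑ i, v i • x i)) = ∑ i, v i * b j (S (x i)) := by
          rw [map_sum, map_sum]
          exact Finset.sum_congr rfl fun i _ => by rw [map_smul, map_smul, smul_eq_mul]
      _ = Mat.mulVec (fun i => v i) j := by
          rw [Matrix.mulVec, dotProduct]
          exact Finset.sum_congr rfl fun i _ => mul_comm _ _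
  -- determinant lower bound
  have hdet : ρ^n ≤ |Mat.det| := by
    have htriang : Mat.BlockTriangular OrderDual.toDual := by
      intro i j hij
      exact htri j i hij
    have hdet1 : Mat.det = ∏ i, Mat i i := Matrix.det_of_lowerTriangular Mat htriang
    have hge : ρ^n ≤ ∏ i, Mat i i := by
      calc ρ^n = ∏ _i : Fin n, ρ := by
            rw [Finset.prod_const, Finset.card_univ, Fintype.card_fin]
        _ ≤ ∏ i, Mat i i :=
            Finset.prod_le_prod (fun _ _ => hρ0.le) (fun i _ => (hdiag i).le)
    rw [hdet1]
    exact le_trans hge (le_abs_self _)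
  -- chain of inequalities on approximation numbers
  have hDle := det_le_prod_approxNumber Mat Mcl hMclapp
  have hterm : ∀ k ∈ Finset.range n,
      approxNumber (k+1) Mcl ≤ (n:ℝ) * (σm * (((k+1:ℕ):ℝ)^α)⁻¹) := by
    intro k hk
    have hk1n : k + 1 ≤ n := Nat.succ_le_of_lt (Finset.mem_range.mp hk)
    have hk1 : 1 ≤ k + 1 := Nat.succ_le_succ (Nat.zero_le k)
    have h1 : approxNumber (k+1) Mcl ≤
        ‖ell2ToEucl n‖ * ‖euclToEll2 n‖ * approxNumber (k+1) T := by
      rw [hMcl]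
      exact approxNumber_comp_le hk1 (ell2ToEucl n) T (euclToEll2 n)
    have h2 : ‖ell2ToEucl n‖ * ‖euclToEll2 n‖ * approxNumber (k+1) T ≤
        approxNumber (k+1) T := by
      have h2a := approxNumber_nonneg (k+1) T
      have hab : ‖ell2ToEucl n‖ * ‖euclToEll2 n‖ ≤ 1 :=
        mul_le_one₀ (norm_ell2ToEucl_le n) (norm_nonneg _) (norm_euclToEll2_le n)
      calc ‖ell2ToEucl n‖ * ‖euclToEll2 n‖ * approxNumber (k+1) T
          ≤ 1 * approxNumber (k+1) T := mul_le_mul_of_nonneg_right hab h2a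
        _ = approxNumber (k+1) T := one_mul _
    have h3 : approxNumber (k+1) T ≤ hilbertNumber (k+1) S * (‖B‖*‖A‖) := by
      rw [hT]
      exact approx_le_hilbert_mul hk1 S A B hAne hBne
    have h4 : hilbertNumber (k+1) S * (‖B‖*‖A‖) ≤ hilbertNumber (k+1) S * n :=
      mul_le_mul_of_nonneg_left hABn (hilbertNumber_nonneg _ _)
    have h5 : (((k+1:ℕ)):ℝ)^α * hilbertNumber (k+1) S ≤ σm := by
      rw [hσm]
      exact Finset.le_sup' (fun k : ℕ => (k:ℝ)^α * hilbertNumber k S)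
        (Finset.mem_Icc.mpr ⟨hk1, hk1n⟩)
    have hpow : (0:ℝ) < (((k+1:ℕ)):ℝ)^α :=
      Real.rpow_pos_of_pos (by positivity) α
    have h6 : hilbertNumber (k+1) S ≤ σm * ((((k+1:ℕ)):ℝ)^α)⁻¹ := by
      calc hilbertNumber (k+1) S
          = (((k+1:ℕ)):ℝ)^α * hilbertNumber (k+1) S * ((((k+1:ℕ)):ℝ)^α)⁻¹ := by
            field_simp
        _ ≤ σm * ((((k+1:ℕ)):ℝ)^α)⁻¹ :=
            mul_le_mul_of_nonneg_right h5 (by positivity)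
    calc approxNumber (k+1) Mcl ≤ approxNumber (k+1) T := le_trans h1 h2
      _ ≤ hilbertNumber (k+1) S * n := le_trans h3 h4
      _ ≤ (σm * ((((k+1:ℕ)):ℝ)^α)⁻¹) * n :=
          mul_le_mul_of_nonneg_right h6 (Nat.cast_nonneg n)
      _ = (n:ℝ) * (σm * ((((k+1:ℕ)):ℝ)^α)⁻¹) := by ring
  have hchain : ρ^n ≤ ∏ k ∈ Finset.range n, ((n:ℝ) * (σm * (((k+1:ℕ):ℝ)^α)⁻¹)) := by
    refine le_trans (hdet.trans hDle) ?_
    exact Finset.prod_le_prod (fun k _ => approxNumber_nonneg _ _) hterm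
  -- evaluate the product
  have hfact : ∏ k ∈ Finset.range n, (((k+1:ℕ)):ℝ)^α = ((Nat.factorial n : ℝ))^α := by
    rw [Real.finset_prod_rpow _ _ (fun i _ => by positivity) α]
    congr 1
    rw [← Nat.cast_prod]
    congr 1
    exact Finset.prod_range_add_one_eq_factorial n
  have hprodeval : ∏ k ∈ Finset.range n, ((n:ℝ) * (σm * (((k+1:ℕ):ℝ)^α)⁻¹))
      = (n:ℝ)^n * σm^n * (((Nat.factorial n : ℝ))^α)⁻¹ := by
    rw [Finset.prod_mul_distrib, Finset.prod_mul_distrib, Finset.prod_const,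
      Finset.prod_const, Finset.prod_inv_distrib, hfact, Finset.card_range]
    ring
  rw [hprodeval] at hchain
  -- final numeric estimate
  have hN : (0:ℝ) < (n:ℝ) := by exact_mod_cast hi0
  have hF : (0:ℝ) < (Nat.factorial n : ℝ) := by exact_mod_cast Nat.factorial_pos n
  have hEp : (0:ℝ) < Real.exp 1 := Real.exp_pos 1
  have hP : (0:ℝ) < (n:ℝ) ^ (α * n) := Real.rpow_pos_of_pos hN _
  have hQ : (0:ℝ) < ((Nat.factorial n : ℝ))^α := Real.rpow_pos_of_pos hF _
  have hC : (0:ℝ) < (Real.exp 1 ^ α)^n := pow_pos (Real.rpow_pos_of_pos hEp α) n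
  have hbase : (n:ℝ) ^ (α * (n:ℝ)) ≤ (Real.exp 1 ^ α)^n * ((Nat.factorial n : ℝ))^α := by
    have h1 : ((n:ℝ)^n)^α ≤ (Real.exp 1 ^ n * (Nat.factorial n:ℝ))^α :=
      Real.rpow_le_rpow (by positivity) (pow_factorial_le n) hα.le
    have h2 : ((n:ℝ)^n)^α = (n:ℝ)^(α * (n:ℝ)) := by
      rw [← Real.rpow_natCast (n:ℝ) n, ← Real.rpow_mul hN.le, mul_comm]
    have h3 : (Real.exp 1 ^ n * (Nat.factorial n:ℝ))^α
        = (Real.exp 1 ^ α)^n * ((Nat.factorial n : ℝ))^α := by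
      rw [Real.mul_rpow (by positivity) hF.le]
      congr 1
      rw [← Real.rpow_natCast (Real.exp 1) n, ← Real.rpow_mul hEp.le,
        ← Real.rpow_natCast (Real.exp 1 ^ α) n, ← Real.rpow_mul hEp.le, mul_comm]
    rw [← h2, ← h3]
    exact h1
  have hsplit : ((n:ℝ) ^ ((-α)+1))^n = (n:ℝ)^n * ((n:ℝ) ^ (α * (n:ℝ)))⁻¹ := by
    rw [← Real.rpow_natCast ((n:ℝ) ^ ((-α)+1)) n, ← Real.rpow_mul hN.le]
    have h1 : ((-α)+1) * (n:ℝ) = (n:ℝ) - α * (n:ℝ) := by ring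
    rw [h1, Real.rpow_sub hN, Real.rpow_natCast]
    rw [div_eq_mul_inv]
  have hfinal : (n:ℝ)^n * σm^n * (((Nat.factorial n : ℝ))^α)⁻¹ ≤ R^n := by
    have hRn : R^n = (Real.exp 1 ^ α)^n * (((n:ℝ) ^ ((-α)+1))^n) * σm^n := by
      rw [hR]; ring
    rw [hRn, hsplit]
    have hmain : (n:ℝ)^n * (((Nat.factorial n : ℝ))^α)⁻¹ ≤
        (Real.exp 1 ^ α)^n * ((n:ℝ)^n * ((n:ℝ) ^ (α * (n:ℝ)))⁻¹) := by
      have h1 : (1:ℝ)/((Nat.factorial n : ℝ))^α ≤ (Real.exp 1 ^ α)^n / (n:ℝ)^(α * (n:ℝ)) := by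
        rw [div_le_div_iff₀ hQ hP]
        calc 1 * (n:ℝ)^(α*(n:ℝ)) = (n:ℝ)^(α*(n:ℝ)) := one_mul _
          _ ≤ (Real.exp 1 ^ α)^n * ((Nat.factorial n : ℝ))^α := hbase
      have h2 : ((((Nat.factorial n : ℝ))^α)⁻¹ : ℝ) ≤
          (Real.exp 1 ^ α)^n * ((n:ℝ)^(α * (n:ℝ)))⁻¹ := by
        rw [← one_div]
        calc (1:ℝ)/((Nat.factorial n : ℝ))^α
            ≤ (Real.exp 1 ^ α)^n / (n:ℝ)^(α * (n:ℝ)) := h1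
          _ = (Real.exp 1 ^ α)^n * ((n:ℝ)^(α * (n:ℝ)))⁻¹ := div_eq_mul_inv _ _
      calc (n:ℝ)^n * (((Nat.factorial n : ℝ))^α)⁻¹
          ≤ (n:ℝ)^n * ((Real.exp 1 ^ α)^n * ((n:ℝ)^(α * (n:ℝ)))⁻¹) :=
            mul_le_mul_of_nonneg_left h2 (by positivity)
        _ = (Real.exp 1 ^ α)^n * ((n:ℝ)^n * ((n:ℝ) ^ (α * (n:ℝ)))⁻¹) := by ring
    calc (n:ℝ)^n * σm^n * (((Nat.factorial n : ℝ))^α)⁻¹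
        = ((n:ℝ)^n * (((Nat.factorial n : ℝ))^α)⁻¹) * σm^n := by ring
      _ ≤ ((Real.exp 1 ^ α)^n * ((n:ℝ)^n * ((n:ℝ) ^ (α * (n:ℝ)))⁻¹)) * σm^n :=
          mul_le_mul_of_nonneg_right hmain (by positivity)
      _ = (Real.exp 1 ^ α)^n * ((n:ℝ)^n * ((n:ℝ) ^ (α * (n:ℝ)))⁻¹) * σm^n := by ring
  have hlast : ρ^n ≤ R^n := le_trans hchain hfinal
  have hle : ρ ≤ R := by
    have := pow_le_pow_left₀ hρ0.le (le_refl ρ)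
    by_contra hgt
    push_neg at hgt
    have : R^n < ρ^n := by
      apply pow_lt_pow_left₀ hgt hR0
      omega
    linarith
  linarith
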